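/- Let H be a finite-dimensional complex inner product space, let M be a positive semidefinite operator on H with M ≤ I, let 0 ≤ ε ≤ 1/2, and let ψ₁, ψ₂ ∈ H be unit vectors such that ⟨ψ₁| M |ψ₁⟩ ≤ ε and ⟨ψ₂| M |ψ₂⟩ ≥ 1−ε. Then |⟨ψ₁|ψ₂⟩|² ≤ 4ε(1−ε). -/

import Mathlib

open scoped ComplexOrder

/-- Cauchy–Schwarz for a positive operator: `‖⟪x, T y⟫‖² ≤ re⟪x, T x⟫ * re⟪y, T y⟫`. -/
lemma pos_op_cauchy_schwarz {H : Type*} [NormedAddCommGroup H] [InnerProductSpace ℂ H]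
    [FiniteDimensional ℂ H] (T : H →L[ℂ] H) (hT : T.IsPositive) (x y : H) :
    ‖(inner ℂ x (T y) : ℂ)‖ * ‖(inner ℂ x (T y) : ℂ)‖
      ≤ Complex.re (inner ℂ x (T x) : ℂ) * Complex.re (inner ℂ y (T y) : ℂ) := by
  have hsymm : ∀ u v : H, (inner ℂ (T u) v : ℂ) = inner ℂ u (T v) :=
    (ContinuousLinearMap.isSelfAdjoint_iff_isSymmetric.mp hT.isSelfAdjoint)
  let C : PreInnerProductSpace.Core ℂ H :=
    { inner := fun u v => inner ℂ u (T v)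
      conj_inner_symm := fun u v => by
        simp [hsymm]
      re_inner_nonneg := fun u => hT.re_inner_nonneg_right u
      add_left := fun u v w => by simp [inner_add_left]
      smul_left := fun u v r => by simp [inner_smul_left, mul_comm] }
  have h : ‖(inner ℂ x (T y) : ℂ)‖ * ‖(inner ℂ y (T x) : ℂ)‖
      ≤ RCLike.re (inner ℂ x (T x) : ℂ) * RCLike.re (inner ℂ y (T y) : ℂ) :=
    @InnerProductSpace.Core.inner_mul_inner_self_le ℂ H _ _ _ C x y
  have hyx : ‖(inner ℂ y (T x) : ℂ)‖ = ‖(inner ℂ x (T y) : ℂ)‖ := by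
    rw [← hsymm x y]; exact norm_inner_symm _ _
  rw [hyx] at h
  simpa using h

set_option maxHeartbeats 1000000 in
/-- Bernstein–Vazirani distinguishing fact. If a positive semidefinite
operator `M ≤ I` on a finite-dimensional complex inner ℂ product space satisfies
`⟨ψ₁|M|ψ₁⟩ ≤ ε` and `⟨ψ₂|M|ψ₂⟩ ≥ 1 − ε` for unit vectors `ψ₁, ψ₂`, then
`|⟨ψ₁|ψ₂⟩|² ≤ 4ε(1−ε)`. -/
theorem bernstein_vazirani_distinguish
    {H : Type*} [NormedAddCommGroup H] [InnerProductSpace ℂ H] [FiniteDimensional ℂ H]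
    (M : H →L[ℂ] H) (hM : M.IsPositive) (hMI : (1 - M).IsPositive)
    (ε : ℝ) (hε0 : 0 ≤ ε) (hε1 : ε ≤ 1 / 2)
    (ψ₁ ψ₂ : H) (hψ₁ : ‖ψ₁‖ = 1) (hψ₂ : ‖ψ₂‖ = 1)
    (h1 : (inner ℂ ψ₁ (M ψ₁) : ℂ) ≤ ((ε : ℝ) : ℂ))
    (h2 : ((1 - ε : ℝ) : ℂ) ≤ (inner ℂ ψ₂ (M ψ₂) : ℂ)) :
    ‖(inner ℂ ψ₁ ψ₂ : ℂ)‖ ^ 2 ≤ 4 * ε * (1 - ε) := by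
  set a : ℝ := Complex.re (inner ℂ ψ₁ (M ψ₁) : ℂ) with ha
  set b : ℝ := Complex.re (inner ℂ ψ₂ (M ψ₂) : ℂ) with hb
  have haε : a ≤ ε := by
    have := (Complex.le_def.mp h1).1
    simpa [ha] using this
  have hbε : 1 - ε ≤ b := by
    have := (Complex.le_def.mp h2).1
    simpa [hb] using this
  have ha0 : 0 ≤ a := by
    have := hM.re_inner_nonneg_right ψ₁
    simpa using this
  have hre1 : ∀ ψ : H, ‖ψ‖ = 1 →
      Complex.re (inner ℂ ψ ((1 - M) ψ) : ℂ) = 1 - Complex.re (inner ℂ ψ (M ψ) : ℂ) := by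
    intro ψ hψ
    have : (inner ℂ ψ ((1 - M) ψ) : ℂ) = inner ℂ ψ ψ - inner ℂ ψ (M ψ) := by
      simp [ContinuousLinearMap.sub_apply, inner_sub_right]
    rw [this]
    have hself : (inner ℂ ψ ψ : ℂ) = 1 := by
      rw [inner_self_eq_norm_sq_to_K, hψ]; norm_num
    simp [hself, hψ]
  have ha1 : a ≤ 1 := by
    have := hMI.re_inner_nonneg_right ψ₁
    simp only [RCLike.re_to_complex] at this
    rw [hre1 ψ₁ hψ₁] at this
    linarith
  have hb1 : b ≤ 1 := by
    have := hMI.re_inner_nonneg_right ψ₂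
    simp only [RCLike.re_to_complex] at this
    rw [hre1 ψ₂ hψ₂] at this
    linarith
  have hb0 : 0 ≤ b := by
    have := hM.re_inner_nonneg_right ψ₂
    simpa using this
  -- Cauchy–Schwarz for M and 1 - M
  have cs1 := pos_op_cauchy_schwarz M hM ψ₁ ψ₂
  have cs2 := pos_op_cauchy_schwarz (1 - M) hMI ψ₁ ψ₂
  rw [hre1 ψ₁ hψ₁, hre1 ψ₂ hψ₂] at cs2
  -- split the inner ℂ product
  have hsplit : (inner ℂ ψ₁ ψ₂ : ℂ) = inner ℂ ψ₁ (M ψ₂) + inner ℂ ψ₁ ((1 - M) ψ₂) := by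
    simp [ContinuousLinearMap.sub_apply, inner_sub_right]
  set s : ℝ := ‖(inner ℂ ψ₁ (M ψ₂) : ℂ)‖ with hs
  set t : ℝ := ‖(inner ℂ ψ₁ ((1 - M) ψ₂) : ℂ)‖ with ht
  have hs0 : 0 ≤ s := norm_nonneg _
  have ht0 : 0 ≤ t := norm_nonneg _
  have htri : ‖(inner ℂ ψ₁ ψ₂ : ℂ)‖ ≤ s + t := by
    rw [hsplit]; exact norm_add_le _ _
  have hs2 : s * s ≤ a * b := cs1
  have ht2 : t * t ≤ (1 - a) * (1 - b) := cs2
  -- bound s and t by square roots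
  have hsle : s ≤ Real.sqrt (a * b) := by
    have h' := Real.sqrt_le_sqrt hs2
    rwa [Real.sqrt_mul_self hs0] at h'
  have htle : t ≤ Real.sqrt ((1 - a) * (1 - b)) := by
    have h' := Real.sqrt_le_sqrt ht2
    rwa [Real.sqrt_mul_self ht0] at h'
  have q1 : a * (1 - a) ≤ ε * (1 - ε) := by nlinarith
  have q2 : b * (1 - b) ≤ ε * (1 - ε) := by nlinarith
  have key1 : Real.sqrt (a * b) * Real.sqrt ((1 - a) * (1 - b)) ≤ ε * (1 - ε) := by
    rw [← Real.sqrt_mul (mul_nonneg ha0 hb0)]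
    have hrw : a * b * ((1 - a) * (1 - b)) = (a * (1 - a)) * (b * (1 - b)) := by ring
    rw [hrw]
    have hle : (a * (1 - a)) * (b * (1 - b)) ≤ (ε * (1 - ε)) ^ 2 := by
      have hbb : 0 ≤ b * (1 - b) := mul_nonneg hb0 (by linarith)
      have hee : 0 ≤ ε * (1 - ε) := mul_nonneg hε0 (by linarith)
      calc (a * (1 - a)) * (b * (1 - b)) ≤ (ε * (1 - ε)) * (b * (1 - b)) :=
            mul_le_mul_of_nonneg_right q1 hbb
        _ ≤ (ε * (1 - ε)) * (ε * (1 - ε)) := mul_le_mul_of_nonneg_left q2 hee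
        _ = (ε * (1 - ε)) ^ 2 := by ring
    calc Real.sqrt ((a * (1 - a)) * (b * (1 - b))) ≤ Real.sqrt ((ε * (1 - ε)) ^ 2) :=
          Real.sqrt_le_sqrt hle
      _ = ε * (1 - ε) := Real.sqrt_sq (mul_nonneg hε0 (by linarith))
  have hst : s * t ≤ ε * (1 - ε) :=
    le_trans (mul_le_mul hsle htle ht0 (Real.sqrt_nonneg _)) key1
  have hmix : a * b + (1 - a) * (1 - b) ≤ 2 * (ε * (1 - ε)) := by
    nlinarith [mul_nonneg (by linarith : (0:ℝ) ≤ ε - a) (by linarith : (0:ℝ) ≤ 2 * b - 1),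
      mul_nonneg (by linarith : (0:ℝ) ≤ b - (1 - ε)) (by linarith : (0:ℝ) ≤ 1 - 2 * ε)]
  have hnn : 0 ≤ ‖(inner ℂ ψ₁ ψ₂ : ℂ)‖ := norm_nonneg _
  nlinarith [htri, hs2, ht2, hst, hmix, hnn, sq_nonneg (s + t)]
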